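/- Let a countable group Λ act on the right by measure-preserving transformations on a nonzero σ-finite measure space (Σ, σ), let G be a locally compact second countable topological group with its Borel σ-algebra, and let Φ̃ : Σ × Σ → G be a measurable map such that: (i) for every λ ∈ Λ, Φ̃(xλ, yλ) = Φ̃(x, y) for σ²-a.e. (x, y); and (ii) Φ̃(x, z₁) Φ̃(y, z₁)⁻¹ = Φ̃(x, z₂) Φ̃(y, z₂)⁻¹ for σ⁴-a.e. (x, y, z₁, z₂). Then there exists a measurable map F : Σ × Σ → G with F(x, y) = Φ̃(x, z) Φ̃(y, z)⁻¹ for σ³-a.e. (x, y, z), and F satisfies all four conditions: (C_inv) for every λ ∈ Λ, F(xλ, yλ) = F(x, y) σ²-a.e.; (C_cncl) for every λ ∈ Λ, F(xλ, y) F(x, y)⁻¹ = F(xλ, z) F(x, z)⁻¹ σ³-a.e.; (C_sym) F(x, y) = F(y, x)⁻¹ σ²-a.e.; and (C_coc) F(x, y) F(y, z) = F(x, z) σ³-a.e. -/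

import Mathlib

open MeasureTheory Filter Topology

lemma qmp_pmap {α β γ δ : Type*} [MeasurableSpace α] [MeasurableSpace β]
    [MeasurableSpace γ] [MeasurableSpace δ] {μa : Measure α} {μb : Measure β}
    {μc : Measure γ} {μd : Measure δ} [SFinite μa] [SFinite μc] [SFinite μd]
    {f : α → β} {g : γ → δ}
    (hf : Measure.QuasiMeasurePreserving f μa μb)
    (hg : Measure.QuasiMeasurePreserving g μc μd) :
    Measure.QuasiMeasurePreserving (fun p => (f p.1, g p.2)) (μa.prod μc) (μb.prod μd) :=
  ⟨hf.measurable.comp measurable_fst |>.prodMk (hg.measurable.comp measurable_snd), by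
    have : Measure.map (fun p : α × γ => (f p.1, g p.2)) (μa.prod μc)
        = (Measure.map f μa).prod (Measure.map g μc) :=
      (Measure.map_prod_map _ _ hf.measurable hg.measurable).symm
    rw [this]
    exact hf.absolutelyContinuous.prod hg.absolutelyContinuous⟩

lemma ae_drop {α β : Type*} [MeasurableSpace α] [MeasurableSpace β]
    {μ : Measure α} {ν : Measure β} [SFinite ν] (hν : ν ≠ 0) {P : α → Prop}
    (h : ∀ᵐ q ∂μ.prod ν, P q.1) : ∀ᵐ a ∂μ, P a := by
  haveI : (ae ν).NeBot := ae_neBot.2 hν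
  filter_upwards [Measure.ae_ae_of_ae_prod h] with a ha
  exact ha.exists.choose_spec

/-- Claim 5.6.  Let a countable group `Λ` act on the right by
measure-preserving transformations on a nonzero σ-finite measure space `(Σ, σ)`, let `G` be a
locally compact second countable topological group with its Borel σ-algebra, and let
`Φ̃ : Σ × Σ → G` be measurable with (i) `Φ̃(xλ, yλ) = Φ̃(x, y)` σ²-a.e. for every `λ` and
(ii) `Φ̃(x, z₁) Φ̃(y, z₁)⁻¹ = Φ̃(x, z₂) Φ̃(y, z₂)⁻¹` σ⁴-a.e.  Then there is a measurable
`F : Σ × Σ → G` with `F(x, y) = Φ̃(x, z) Φ̃(y, z)⁻¹` σ³-a.e., satisfying the four conditions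
`(C_inv)`, `(C_cncl)`, `(C_sym)` and `(C_coc)`. -/
theorem exists_F_of_Phi {S Λ : Type} [Group Λ] [Countable Λ]
    [MeasurableSpace S] (σ : Measure S) [SigmaFinite σ] (hσ : σ ≠ 0)
    (r : Λ → S → S)
    (r_one : ∀ s, r 1 s = s) (r_mul : ∀ l₁ l₂ s, r (l₁ * l₂) s = r l₂ (r l₁ s))
    (r_mp : ∀ lam, MeasurePreserving (r lam) σ σ)
    {G : Type} [Group G] [TopologicalSpace G] [IsTopologicalGroup G]
    [LocallyCompactSpace G] [SecondCountableTopology G]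
    [MeasurableSpace G] [BorelSpace G]
    (Φt : S × S → G) (hΦt : Measurable Φt)
    (hi : ∀ lam : Λ, ∀ᵐ p ∂σ.prod σ, Φt (r lam p.1, r lam p.2) = Φt p)
    (hii : ∀ᵐ q ∂σ.prod (σ.prod (σ.prod σ)),
      Φt (q.1, q.2.2.1) * (Φt (q.2.1, q.2.2.1))⁻¹ =
        Φt (q.1, q.2.2.2) * (Φt (q.2.1, q.2.2.2))⁻¹) :
    ∃ F : S × S → G, Measurable F ∧
      (∀ᵐ q ∂σ.prod (σ.prod σ),
        F (q.1, q.2.1) = Φt (q.1, q.2.2) * (Φt (q.2.1, q.2.2))⁻¹) ∧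
      (∀ lam : Λ, ∀ᵐ p ∂σ.prod σ, F (r lam p.1, r lam p.2) = F p) ∧
      (∀ lam : Λ, ∀ᵐ q ∂σ.prod (σ.prod σ),
        F (r lam q.1, q.2.1) * (F (q.1, q.2.1))⁻¹ =
          F (r lam q.1, q.2.2) * (F (q.1, q.2.2))⁻¹) ∧
      (∀ᵐ p ∂σ.prod σ, F p = (F (p.2, p.1))⁻¹) ∧
      (∀ᵐ q ∂σ.prod (σ.prod σ),
        F (q.1, q.2.1) * F (q.2.1, q.2.2) = F (q.1, q.2.2)) := by
  classical
  -- basic quasi-measure-preserving building blocks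
  have qid : Measure.QuasiMeasurePreserving (id : S → S) σ σ :=
    (MeasurePreserving.id σ).quasiMeasurePreserving
  -- ### choice of a good base point z₀
  -- T : (w,(x,(y,z))) ↦ (x,(y,(z,w))) is measure preserving on σ⁴
  have hT : MeasurePreserving
      (fun q : S × (S × (S × S)) => (q.2.1, (q.2.2.1, (q.2.2.2, q.1))))
      (σ.prod (σ.prod (σ.prod σ))) (σ.prod (σ.prod (σ.prod σ))) := by
    have h1 : MeasurePreserving (Prod.swap : S × (S × (S × S)) → _)
        (σ.prod ((σ.prod (σ.prod σ)))) ((σ.prod (σ.prod σ)).prod σ) :=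
      Measure.measurePreserving_swap
    have h2 := measurePreserving_prodAssoc σ (σ.prod σ) σ
    have h3 := (MeasurePreserving.id σ).prod (measurePreserving_prodAssoc σ σ σ)
    exact (h3.comp h2).comp h1
  have hsel : ∀ᵐ w ∂σ, ∀ᵐ q ∂σ.prod (σ.prod σ),
      Φt (q.1, q.2.2) * (Φt (q.2.1, q.2.2))⁻¹ = Φt (q.1, w) * (Φt (q.2.1, w))⁻¹ := by
    have := Measure.ae_ae_of_ae_prod (hT.quasiMeasurePreserving.ae hii)
    filter_upwards [this] with w hw
    filter_upwards [hw] with q hq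
    exact hq
  haveI : (ae σ).NeBot := ae_neBot.2 hσ
  obtain ⟨z₀, hz₀⟩ := hsel.exists
  set F : S × S → G := fun p => Φt (p.1, z₀) * (Φt (p.2, z₀))⁻¹ with hFdef
  have hFmeas : Measurable F := by
    apply Measurable.mul
    · exact hΦt.comp (measurable_fst.prodMk measurable_const)
    · exact (hΦt.comp (measurable_snd.prodMk measurable_const)).inv
  have hKey : ∀ᵐ q ∂σ.prod (σ.prod σ),
      F (q.1, q.2.1) = Φt (q.1, q.2.2) * (Φt (q.2.1, q.2.2))⁻¹ := by
    filter_upwards [hz₀] with q hq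
    exact hq.symm
  refine ⟨F, hFmeas, hKey, ?_, ?_, ?_, ?_⟩
  -- (C_inv)
  · intro lam
    have hg : MeasurePreserving
        (fun q : S × (S × S) => (r lam q.1, (r lam q.2.1, r lam q.2.2)))
        (σ.prod (σ.prod σ)) (σ.prod (σ.prod σ)) :=
      (r_mp lam).prod ((r_mp lam).prod (r_mp lam))
    have A1 := hg.quasiMeasurePreserving.ae hKey
    -- Φt invariance lifted to σ³ via projections (x,(y,z)) ↦ (x,z) and ↦ (y,z)
    have p13 : Measure.QuasiMeasurePreserving (fun q : S × (S × S) => (q.1, q.2.2))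
        (σ.prod (σ.prod σ)) (σ.prod σ) :=
      qmp_pmap qid Measure.quasiMeasurePreserving_snd
    have p23 : Measure.QuasiMeasurePreserving (fun q : S × (S × S) => q.2)
        (σ.prod (σ.prod σ)) (σ.prod σ) := Measure.quasiMeasurePreserving_snd
    have A2 := p13.ae (hi lam)
    have A3 := p23.ae (hi lam)
    have hC : ∀ᵐ q ∂σ.prod (σ.prod σ), F (r lam q.1, r lam q.2.1) = F (q.1, q.2.1) := by
      filter_upwards [hKey, A1, A2, A3] with q h0 h1 h2 h3
      rw [h0, h1, h2, h3]
    have := (measurePreserving_prodAssoc σ σ σ).quasiMeasurePreserving.ae hC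
    refine ae_drop hσ (P := fun p : S × S => F (r lam p.1, r lam p.2) = F p) ?_
    filter_upwards [this] with q hq
    exact hq
  -- (C_cncl)
  · intro lam
    have pxyw : Measure.QuasiMeasurePreserving
        (fun q : S × (S × (S × S)) => (q.1, (q.2.1, q.2.2.2)))
        (σ.prod (σ.prod (σ.prod σ))) (σ.prod (σ.prod σ)) :=
      qmp_pmap qid (qmp_pmap qid Measure.quasiMeasurePreserving_snd)
    have pxzw : Measure.QuasiMeasurePreserving
        (fun q : S × (S × (S × S)) => (q.1, q.2.2))
        (σ.prod (σ.prod (σ.prod σ))) (σ.prod (σ.prod σ)) :=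
      qmp_pmap qid Measure.quasiMeasurePreserving_snd
    have rmap : MeasurePreserving
        (fun q : S × (S × (S × S)) => (r lam q.1, q.2))
        (σ.prod (σ.prod (σ.prod σ))) (σ.prod (σ.prod (σ.prod σ))) :=
      (r_mp lam).prod (MeasurePreserving.id _)
    have B1 := (pxyw.comp rmap.quasiMeasurePreserving).ae hKey
    have B2 := pxyw.ae hKey
    have B3 := (pxzw.comp rmap.quasiMeasurePreserving).ae hKey
    have B4 := pxzw.ae hKey
    have hC : ∀ᵐ q ∂σ.prod (σ.prod (σ.prod σ)),
        F (r lam q.1, q.2.1) * (F (q.1, q.2.1))⁻¹ =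
          F (r lam q.1, q.2.2.1) * (F (q.1, q.2.2.1))⁻¹ := by
      filter_upwards [B1, B2, B3, B4] with q h1 h2 h3 h4
      simp only [Function.comp] at h1 h3
      rw [h1, h2, h3, h4]
      group
    -- drop the last coordinate w
    have e4 : MeasurePreserving
        (fun q : (S × (S × S)) × S => (q.1.1, (q.1.2.1, (q.1.2.2, q.2))))
        ((σ.prod (σ.prod σ)).prod σ) (σ.prod (σ.prod (σ.prod σ))) :=
      ((MeasurePreserving.id σ).prod (measurePreserving_prodAssoc σ σ σ)).comp
        (measurePreserving_prodAssoc σ (σ.prod σ) σ)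
    refine ae_drop hσ (P := fun p : S × (S × S) =>
      F (r lam p.1, p.2.1) * (F (p.1, p.2.1))⁻¹ =
        F (r lam p.1, p.2.2) * (F (p.1, p.2.2))⁻¹) ?_
    filter_upwards [e4.quasiMeasurePreserving.ae hC] with q hq
    exact hq
  -- (C_sym)
  · have perm : MeasurePreserving
        (fun q : S × (S × S) => (q.2.1, (q.1, q.2.2)))
        (σ.prod (σ.prod σ)) (σ.prod (σ.prod σ)) := by
      have h1 : MeasurePreserving (MeasurableEquiv.prodAssoc.symm)
          (σ.prod (σ.prod σ)) ((σ.prod σ).prod σ) :=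
        MeasurePreserving.symm _ (measurePreserving_prodAssoc σ σ σ)
      have h2 := (Measure.measurePreserving_swap (μ := σ) (ν := σ)).prod
        (MeasurePreserving.id σ)
      have h3 := measurePreserving_prodAssoc σ σ σ
      exact (h3.comp h2).comp h1
    have A4 := perm.quasiMeasurePreserving.ae hKey
    have hC : ∀ᵐ q ∂σ.prod (σ.prod σ), F (q.1, q.2.1) = (F (q.2.1, q.1))⁻¹ := by
      filter_upwards [hKey, A4] with q h0 h1
      rw [h0, h1]
      group
    refine ae_drop hσ (P := fun p : S × S => F p = (F (p.2, p.1))⁻¹) ?_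
    filter_upwards [(measurePreserving_prodAssoc σ σ σ).quasiMeasurePreserving.ae hC] with q hq
    exact hq
  -- (C_coc)
  · have pxyw : Measure.QuasiMeasurePreserving
        (fun q : S × (S × (S × S)) => (q.1, (q.2.1, q.2.2.2)))
        (σ.prod (σ.prod (σ.prod σ))) (σ.prod (σ.prod σ)) :=
      qmp_pmap qid (qmp_pmap qid Measure.quasiMeasurePreserving_snd)
    have pxzw : Measure.QuasiMeasurePreserving
        (fun q : S × (S × (S × S)) => (q.1, q.2.2))
        (σ.prod (σ.prod (σ.prod σ))) (σ.prod (σ.prod σ)) :=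
      qmp_pmap qid Measure.quasiMeasurePreserving_snd
    have pyzw : Measure.QuasiMeasurePreserving
        (fun q : S × (S × (S × S)) => q.2)
        (σ.prod (σ.prod (σ.prod σ))) (σ.prod (σ.prod σ)) :=
      Measure.quasiMeasurePreserving_snd
    have D1 := pxyw.ae hKey
    have D2 := pyzw.ae hKey
    have D3 := pxzw.ae hKey
    have hC : ∀ᵐ q ∂σ.prod (σ.prod (σ.prod σ)),
        F (q.1, q.2.1) * F (q.2.1, q.2.2.1) = F (q.1, q.2.2.1) := by
      filter_upwards [D1, D2, D3] with q h1 h2 h3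
      rw [h1, h2, h3]
      group
    have e4 : MeasurePreserving
        (fun q : (S × (S × S)) × S => (q.1.1, (q.1.2.1, (q.1.2.2, q.2))))
        ((σ.prod (σ.prod σ)).prod σ) (σ.prod (σ.prod (σ.prod σ))) :=
      ((MeasurePreserving.id σ).prod (measurePreserving_prodAssoc σ σ σ)).comp
        (measurePreserving_prodAssoc σ (σ.prod σ) σ)
    refine ae_drop hσ (P := fun p : S × (S × S) =>
      F (p.1, p.2.1) * F (p.2.1, p.2.2) = F (p.1, p.2.2)) ?_
    filter_upwards [e4.quasiMeasurePreserving.ae hC] with q hq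
    exact hq
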